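/- Let 1 ≤ j ≠ j' ≤ k and let M = d_1 ⋯ d_k − (d_1 + ⋯ + d_k) + k − 1 = dim S. Let (ζ_s)_{s=0}^{M−1} be an orthonormal basis of S such that: ζ_0 = (e_{δ_{j'}} − e_{δ_j})/√2; if k ≥ 3, then ζ_2 = [(k−2)(e_{δ_j} + e_{δ_{j'}}) − 2 ∑_{t ≠ j, j'} e_{δ_t}] / √(2k(k−2)); and every ζ_s other than ζ_0 (and ζ_2 when k ≥ 3) is orthogonal to both e_{δ_j} and e_{δ_{j'}}. Let p_0, …, p_{M−1} be nonnegative reals with p_0 + (k−2) p_2 > 0 (for k = 2 this means p_0 > 0). Then the positive operator ρ = ∑_{s=0}^{M−1} p_s |ζ_s⟩⟨ζ_s| is not positive under partial transpose at level j: its matrix satisfies that ρ^{PT_j} is not positive semidefinite. -/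

import Mathlib

open scoped ComplexOrder
open Matrix

lemma psd_row_zero {n : Type*} [Fintype n] [DecidableEq n] {A : Matrix n n ℂ}
    (hA : A.PosSemidef) {i : n} (hi : A i i = 0) (l : n) : A i l = 0 := by
  have h : A *ᵥ Pi.single i 1 = 0 := by
    rw [← hA.dotProduct_mulVec_zero_iff]
    simpa [Matrix.mulVec_single, dotProduct, Pi.single_apply, apply_ite] using hi
  have h2 : A l i = 0 := by simpa [Matrix.mulVec_single] using congrFun h l
  rw [← hA.1.apply, h2, star_zero]

/-- Positive operators `ρ = ∑ p_s |ζ_s⟩⟨ζ_s|` built from the special orthonormal basis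
`(ζ_s)` of `S`, with `p_s ≥ 0` and `p_0 + (k−2)p_2 > 0`, are not positive under partial
transpose at level `j`. -/
theorem stmt_10 (k : ℕ) (hk : 2 ≤ k) (d : Fin k → ℕ) (hd : ∀ r, 2 ≤ d r)
    (u : ℕ → EuclideanSpace ℂ (∀ r, Fin (d r)))
    (hu : ∀ n, u n = ∑ i ∈ Finset.univ.filter
        (fun i : ∀ r, Fin (d r) => ∑ r, (i r : ℕ) = n),
      EuclideanSpace.single i (1 : ℂ))
    (S : Submodule ℂ (EuclideanSpace ℂ (∀ r, Fin (d r))))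
    (hS : S = (Submodule.span ℂ (u '' Set.Iic (∑ r, (d r - 1))))ᗮ)
    (δ : Fin k → ∀ r, Fin (d r))
    (hδ : ∀ t r, (δ t r : ℕ) = if r = t then 1 else 0)
    (j j' : Fin k) (hjj' : j ≠ j')
    (M : ℕ) (hM : M = (∏ r, d r) - (∑ r, d r) + k - 1)
    (ζ : ℕ → EuclideanSpace ℂ (∀ r, Fin (d r)))
    (hζo : Orthonormal ℂ (fun s : Fin M => ζ (s : ℕ)))
    (hζspan : Submodule.span ℂ (ζ '' Set.Iio M) = S)
    (hζ₀ : ζ 0 = (Real.sqrt 2 : ℂ)⁻¹ •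
      (EuclideanSpace.single (δ j') (1 : ℂ) - EuclideanSpace.single (δ j) (1 : ℂ)))
    (hζ₂ : 3 ≤ k → ζ 2 = (Real.sqrt (2 * (k : ℝ) * ((k : ℝ) - 2)) : ℂ)⁻¹ •
      (((k : ℂ) - 2) • (EuclideanSpace.single (δ j) (1 : ℂ)
          + EuclideanSpace.single (δ j') (1 : ℂ))
        - (2 : ℂ) • ∑ t ∈ Finset.univ.filter (fun t => t ≠ j ∧ t ≠ j'),
            EuclideanSpace.single (δ t) (1 : ℂ)))
    (hζrest : ∀ s < M, s ≠ 0 → (3 ≤ k → s ≠ 2) →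
      (inner ℂ (EuclideanSpace.single (δ j) (1 : ℂ)) (ζ s) : ℂ) = 0 ∧
      (inner ℂ (EuclideanSpace.single (δ j') (1 : ℂ)) (ζ s) : ℂ) = 0)
    (p : ℕ → ℝ) (hp : ∀ s < M, 0 ≤ p s)
    (hppos : 0 < p 0 + ((k : ℝ) - 2) * p 2)
    (ρ : Matrix (∀ r, Fin (d r)) (∀ r, Fin (d r)) ℂ)
    (hρ : ∀ a b, ρ a b = ∑ s ∈ Finset.range M,
      (p s : ℂ) * ζ s a * (starRingEnd ℂ) (ζ s b))
    (ρPT : Matrix (∀ r, Fin (d r)) (∀ r, Fin (d r)) ℂ)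
    (hρPT : ∀ a b, ρPT a b =
      ρ (Function.update a j (b j)) (Function.update b j (a j))) :
    ¬ ρPT.PosSemidef := by
  intro hPSD
  have hd0 : ∀ r, 0 < d r := fun r => lt_of_lt_of_le two_pos (hd r)
  set z : ∀ r, Fin (d r) := fun r => ⟨0, hd0 r⟩ with hz
  have hoj : 1 < d j := hd j
  set oj : Fin (d j) := ⟨1, hoj⟩ with hojdef
  -- distinctness of the δ's
  have hδne : ∀ t t' : Fin k, t ≠ t' → δ t ≠ δ t' := by
    intro t t' h hc
    have hv : (δ t t : ℕ) = (δ t' t : ℕ) := by rw [congrFun hc t]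
    rw [hδ, hδ] at hv
    simp [h] at hv
  -- ζ s vanishes at z
  have hfilter0 : Finset.univ.filter
      (fun i : ∀ r, Fin (d r) => ∑ r, (i r : ℕ) = 0) = {z} := by
    ext i
    simp only [Finset.mem_filter, Finset.mem_univ, true_and, Finset.mem_singleton,
      Finset.sum_eq_zero_iff, funext_iff, Fin.ext_iff]
    simp [hz]
  have hu0 : u 0 = EuclideanSpace.single z 1 := by
    rw [hu 0, hfilter0, Finset.sum_singleton]
  have hζz : ∀ s, s < M → ζ s z = 0 := by
    intro s hs
    have hmem : ζ s ∈ S := by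
      rw [← hζspan]; exact Submodule.subset_span ⟨s, hs, rfl⟩
    rw [hS] at hmem
    have h0 := (Submodule.mem_orthogonal _ _).mp hmem (u 0)
      (Submodule.subset_span ⟨0, Set.mem_Iic.mpr (Nat.zero_le _), rfl⟩)
    rw [hu0, EuclideanSpace.inner_single_left] at h0
    simpa using h0
  -- other ζ's vanish at δ j, δ j'
  have hζδ : ∀ s, s < M → s ≠ 0 → (3 ≤ k → s ≠ 2) → ζ s (δ j) = 0 ∧ ζ s (δ j') = 0 := by
    intro s h1 h2 h3
    obtain ⟨ha, hb⟩ := hζrest s h1 h2 h3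
    rw [EuclideanSpace.inner_single_left] at ha hb
    exact ⟨by simpa using ha, by simpa using hb⟩
  -- partial transpose entries
  have key : ∀ c : (∀ r, Fin (d r)), c j = z j → ρ (δ j) c = 0 := by
    intro c hc
    have hδjeq : Function.update z j oj = δ j := by
      funext r
      rcases eq_or_ne r j with rfl | hr
      · rw [Function.update_self]
        apply Fin.ext; rw [hδ]; simp [hojdef]
      · rw [Function.update_of_ne hr]
        apply Fin.ext; rw [hδ]; simp [hr, hz]
    have hbeq : ρPT z (Function.update c j oj) = ρ (δ j) c := by
      rw [hρPT]
      congr 1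
      · rw [Function.update_self]; exact hδjeq
      · rw [Function.update_idem, ← hc, Function.update_eq_self]
    have hdiag : ρPT z z = 0 := by
      rw [hρPT, Function.update_eq_self, hρ]
      refine Finset.sum_eq_zero fun s hs => ?_
      rw [hζz s (Finset.mem_range.mp hs)]; ring
    have h := psd_row_zero hPSD hdiag (Function.update c j oj)
    rw [hbeq] at h; exact h
  -- bounds on M
  have hM1 : 0 < M := by omega
  -- values of ζ 0
  have hsq2 : ((Real.sqrt 2 : ℝ) : ℂ) ≠ 0 :=
    Complex.ofReal_ne_zero.mpr (ne_of_gt (Real.sqrt_pos.mpr (by norm_num)))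
  have e1 : ζ 0 (δ j) = -(Real.sqrt 2 : ℂ)⁻¹ := by
    rw [hζ₀]
    simp [EuclideanSpace.single_apply, hδne j j' hjj']
  have e2 : ζ 0 (δ j') = (Real.sqrt 2 : ℂ)⁻¹ := by
    rw [hζ₀]
    simp [EuclideanSpace.single_apply, hδne j' j hjj'.symm]
  have hcj' : δ j' j = z j := by
    apply Fin.ext; rw [hδ]; simp [hjj', hz]
  by_cases h3 : 3 ≤ k
  · -- case k ≥ 3
    have hM2 : 2 < M := by
      rcases Nat.lt_or_ge k 4 with h4 | h4
      · have hk3 : k = 3 := by omega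
        subst hk3
        have hprod : d 0 + d 1 + d 2 + 1 ≤ d 0 * d 1 * d 2 := by
          have h01 : d 0 + d 1 ≤ d 0 * d 1 := by
            have a1 := Nat.mul_le_mul (le_refl (d 0)) (hd 1)
            have a2 := Nat.mul_le_mul (hd 0) (le_refl (d 1))
            linarith
          have h02 : d 0 + d 2 ≤ d 0 * d 2 := by
            have a1 := Nat.mul_le_mul (le_refl (d 0)) (hd 2)
            have a2 := Nat.mul_le_mul (hd 0) (le_refl (d 2))
            linarith
          have h12 : d 1 + d 2 ≤ d 1 * d 2 := by
            have a1 := Nat.mul_le_mul (le_refl (d 1)) (hd 2)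
            have a2 := Nat.mul_le_mul (hd 1) (le_refl (d 2))
            linarith
          have h := Nat.mul_le_mul h01 (le_refl (d 2))
          rw [add_mul] at h
          linarith [hd 2]
        rw [Fin.prod_univ_three, Fin.sum_univ_three] at hM
        omega
      · omega
    -- pick t0 distinct from j, j'
    obtain ⟨t0, ht0⟩ : ∃ t0 : Fin k, t0 ∉ ({j, j'} : Finset (Fin k)) := by
      by_contra h
      push_neg at h
      have hcard := Finset.card_le_card (fun t _ => h t : Finset.univ ⊆ {j, j'})
      have h2 : ({j, j'} : Finset (Fin k)).card ≤ 2 :=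
        le_trans (Finset.card_insert_le _ _) (by simp)
      simp [Finset.card_fin] at hcard
      omega
    simp only [Finset.mem_insert, Finset.mem_singleton, not_or] at ht0
    obtain ⟨ht0j, ht0j'⟩ := ht0
    -- sum reduction
    have hsub : ({0, 2} : Finset ℕ) ⊆ Finset.range M := by
      intro x hx
      simp only [Finset.mem_insert, Finset.mem_singleton] at hx
      rcases hx with rfl | rfl <;> simp [Finset.mem_range] <;> omega
    have hred : ∀ (g : ℕ → ℂ), (∀ s ∈ Finset.range M, s ∉ ({0, 2} : Finset ℕ) → g s = 0) →
        ∑ s ∈ Finset.range M, g s = g 0 + g 2 := by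
      intro g hg
      rw [← Finset.sum_subset hsub hg]
      rw [Finset.sum_pair (by norm_num : (0 : ℕ) ≠ 2)]
    -- values of ζ 2
    set ν : ℂ := ((Real.sqrt (2 * (k : ℝ) * ((k : ℝ) - 2)) : ℝ) : ℂ)⁻¹ with hν
    have hkR : (3 : ℝ) ≤ (k : ℝ) := by exact_mod_cast h3
    have hνne : ν ≠ 0 := by
      apply inv_ne_zero
      apply Complex.ofReal_ne_zero.mpr
      apply ne_of_gt
      apply Real.sqrt_pos.mpr
      nlinarith
    have hk2c : ((k : ℂ) - 2) ≠ 0 := by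
      rw [sub_ne_zero]
      intro hc
      have : k = 2 := by exact_mod_cast hc
      omega
    have hsumapply : ∀ a : ∀ r, Fin (d r),
        ((∑ t ∈ Finset.univ.filter (fun t => t ≠ j ∧ t ≠ j'),
          EuclideanSpace.single (δ t) (1 : ℂ)) : EuclideanSpace ℂ (∀ r, Fin (d r))) a
        = ∑ t ∈ Finset.univ.filter (fun t => t ≠ j ∧ t ≠ j'),
            (if a = δ t then (1 : ℂ) else 0) := by
      intro a
      rw [WithLp.ofLp_sum, Finset.sum_apply]
      exact Finset.sum_congr rfl fun t _ => EuclideanSpace.single_apply _ _ _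
    have e3 : ζ 2 (δ j) = ν * ((k : ℂ) - 2) := by
      rw [hζ₂ h3]
      have hs0 : ∑ t ∈ Finset.univ.filter (fun t => t ≠ j ∧ t ≠ j'),
          (if δ j = δ t then (1 : ℂ) else 0) = 0 := by
        refine Finset.sum_eq_zero fun t ht => ?_
        simp only [Finset.mem_filter] at ht
        rw [if_neg (hδne j t (Ne.symm ht.2.1))]
      simp [EuclideanSpace.single_apply, hδne j j' hjj', hsumapply, hs0]
    have e4 : ζ 2 (δ j') = ν * ((k : ℂ) - 2) := by
      rw [hζ₂ h3]
      have hs0 : ∑ t ∈ Finset.univ.filter (fun t => t ≠ j ∧ t ≠ j'),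
          (if δ j' = δ t then (1 : ℂ) else 0) = 0 := by
        refine Finset.sum_eq_zero fun t ht => ?_
        simp only [Finset.mem_filter] at ht
        rw [if_neg (hδne j' t (Ne.symm ht.2.2))]
      simp [EuclideanSpace.single_apply, hδne j' j hjj'.symm, hsumapply, hs0]
    have e5 : ζ 2 (δ t0) = ν * (-2) := by
      rw [hζ₂ h3]
      have hs1 : ∑ t ∈ Finset.univ.filter (fun t => t ≠ j ∧ t ≠ j'),
          (if δ t0 = δ t then (1 : ℂ) else 0) = 1 := by
        rw [Finset.sum_eq_single t0]
        · rw [if_pos rfl]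
        · intro t ht hne
          rw [if_neg (hδne t0 t hne.symm)]
        · intro h
          exact absurd (Finset.mem_filter.mpr ⟨Finset.mem_univ _, ht0j, ht0j'⟩) h
      simp [EuclideanSpace.single_apply, hδne t0 j ht0j, hδne t0 j' ht0j',
        (hδne j t0 (Ne.symm ht0j)), (hδne j' t0 (Ne.symm ht0j')), hsumapply, hs1]
    have e6 : ζ 0 (δ t0) = 0 := by
      rw [hζ₀]
      simp [EuclideanSpace.single_apply, hδne t0 j ht0j, hδne t0 j' ht0j',
        (hδne j t0 (Ne.symm ht0j)), (hδne j' t0 (Ne.symm ht0j'))]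
    -- entry at δ t0
    have hct0 : δ t0 j = z j := by
      apply Fin.ext; rw [hδ]; simp [Ne.symm ht0j, hz]
    have hB := key (δ t0) hct0
    rw [hρ] at hB
    rw [hred _ (fun s hs hs2 => by
      obtain ⟨ha, _⟩ := hζδ s (Finset.mem_range.mp hs)
        (by intro h0; exact hs2 (by simp [h0])) (fun _ => by intro h0; exact hs2 (by simp [h0]))
      rw [ha]; ring)] at hB
    rw [e3, e5, e6] at hB
    simp only [map_zero, mul_zero, zero_mul, add_zero, zero_add, _root_.map_mul,
      map_neg, map_ofNat, hν, map_inv₀, Complex.conj_ofReal] at hB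
    have hXne : ((Real.sqrt (2 * (k : ℝ) * ((k : ℝ) - 2)) : ℝ) : ℂ) ≠ 0 := by
      apply Complex.ofReal_ne_zero.mpr
      apply ne_of_gt
      apply Real.sqrt_pos.mpr
      nlinarith
    have hp2c : (p 2 : ℂ) = 0 := by
      by_contra hne
      exact (mul_ne_zero (mul_ne_zero hne
        (mul_ne_zero (inv_ne_zero hXne) hk2c))
        (mul_ne_zero (inv_ne_zero hXne) (by norm_num : (-2 : ℂ) ≠ 0))) hB
    have hp2 : p 2 = 0 := by exact_mod_cast hp2c
    -- entry at δ j'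
    have hA := key (δ j') hcj'
    rw [hρ] at hA
    rw [hred _ (fun s hs hs2 => by
      obtain ⟨ha, _⟩ := hζδ s (Finset.mem_range.mp hs)
        (by intro h0; exact hs2 (by simp [h0])) (fun _ => by intro h0; exact hs2 (by simp [h0]))
      rw [ha]; ring)] at hA
    rw [e1, e2, e3, e4] at hA
    rw [show (p 2 : ℂ) = 0 by exact_mod_cast hp2] at hA
    simp only [zero_mul, add_zero, map_inv₀, Complex.conj_ofReal, mul_zero] at hA
    have hp0c : (p 0 : ℂ) = 0 := by
      by_contra hne
      exact (mul_ne_zero (mul_ne_zero hne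
        (neg_ne_zero.mpr (inv_ne_zero hsq2))) (inv_ne_zero hsq2)) hA
    have hp0 : p 0 = 0 := by exact_mod_cast hp0c
    rw [hp0, hp2] at hppos
    simp at hppos
  · -- case k = 2
    have hk2 : k = 2 := by omega
    have hA := key (δ j') hcj'
    rw [hρ] at hA
    rw [Finset.sum_eq_single_of_mem 0 (Finset.mem_range.mpr hM1) (fun s hs hs0 => by
      obtain ⟨ha, _⟩ := hζδ s (Finset.mem_range.mp hs) hs0 (fun hh => absurd hh h3)
      rw [ha]; ring)] at hA
    rw [e1, e2] at hA
    simp only [map_inv₀, Complex.conj_ofReal] at hA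
    have hp0c : (p 0 : ℂ) = 0 := by
      by_contra hne
      exact (mul_ne_zero (mul_ne_zero hne
        (neg_ne_zero.mpr (inv_ne_zero hsq2))) (inv_ne_zero hsq2)) hA
    have hp0 : p 0 = 0 := by exact_mod_cast hp0c
    rw [hp0, hk2] at hppos
    norm_num at hppos
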